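/- For every n ∈ ℕ, the coefficient of q^n in Δ³ is congruent to q₃(n) modulo 2; that is, Σ_{(i,j,k) ∈ ℕ³, i+j+k=n} τ(i)τ(j)τ(k) ≡ q₃(n) (mod 2). -/

import Mathlib

/-- `τ(n)`: the coefficient of `X^n` in `X · ∏_{k=1}^{n} (1 - X^k)^24 ∈ ℤ[X]`,
i.e. the `n`-th `q`-expansion coefficient of the discriminant form `Δ`. -/
noncomputable def tau (n : ℕ) : ℤ :=
  (Polynomial.X * ∏ k ∈ Finset.Icc 1 n, (1 - Polynomial.X ^ k) ^ 24).coeff n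

/-- `Δ = Σ τ(n) qⁿ ∈ ℤ[[q]]`. -/
noncomputable def Delta : PowerSeries ℤ := PowerSeries.mk fun n => tau n

/-- `q₃(n)`: the number of ordered triples `(a, b, c)` of positive odd integers
with `a² + b² + c² = n`. -/
noncomputable def q3 (n : ℕ) : ℕ :=
  Nat.card {t : ℤ × ℤ × ℤ // 0 < t.1 ∧ Odd t.1 ∧ 0 < t.2.1 ∧ Odd t.2.1 ∧
    0 < t.2.2 ∧ Odd t.2.2 ∧ t.1 ^ 2 + t.2.1 ^ 2 + t.2.2 ^ 2 = (n : ℤ)}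

noncomputable section
open Polynomial Finset
open scoped Classical

abbrev R2 : Type := Polynomial (ZMod 2)




lemma h2R : (2 : R2) = 0 := CharTwo.two_eq_zero

/-- Gaussian binomial coefficients over `𝔽₂[X]`, via the `q`-Pascal recursion. -/
noncomputable def gbin : ℕ → ℕ → R2
  | 0, 0 => 1
  | 0, _+1 => 0
  | n+1, 0 => gbin n 0
  | n+1, k+1 => gbin n k + X^(k+1) * gbin n (k+1)

@[simp] lemma gbin_zero_right (n : ℕ) : gbin n 0 = 1 := by
  induction n with
  | zero => rfl
  | succ n ih => rw [gbin, ih]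

lemma gbin_succ (n k : ℕ) : gbin (n+1) (k+1) = gbin n k + X^(k+1) * gbin n (k+1) := by rw [gbin]

lemma gbin_eq_zero {n k : ℕ} (h : n < k) : gbin n k = 0 := by
  induction n generalizing k with
  | zero => match k, h with | k+1, _ => rfl
  | succ n ih =>
    match k, h with
    | k+1, h => rw [gbin_succ, ih (by omega), ih (by omega), mul_zero, add_zero]

@[simp] lemma gbin_diag (n : ℕ) : gbin n n = 1 := by
  induction n with
  | zero => rfl
  | succ n ih => rw [gbin_succ, ih, gbin_eq_zero (by omega), mul_zero, add_zero]

lemma L1 (n : ℕ) : (1 : R2) + X * gbin n 1 = gbin n 1 + X^n := by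
  induction n with
  | zero => simp [gbin_eq_zero]
  | succ n ih =>
    have h1 : gbin (n+1) 1 = gbin n 0 + X^1 * gbin n 1 := gbin_succ n 0
    rw [gbin_zero_right] at h1
    rw [h1]
    linear_combination X * ih

/-- second Pascal rule -/
lemma P2 : ∀ n k : ℕ, k ≤ n → gbin (n+1) (k+1) = gbin n (k+1) + X^(n-k) * gbin n k := by
  intro n
  induction n with
  | zero => intro k hk; interval_cases k; simp [gbin_succ, gbin_eq_zero]
  | succ n ih =>
    intro k hk
    match k with
    | 0 =>
      rw [gbin_succ, gbin_zero_right, pow_one, Nat.sub_zero]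
      have := L1 (n+1)
      linear_combination this
    | k'+1 =>
      have hk' : k' ≤ n := by omega
      have e1 : gbin (n+2) (k'+2) = gbin (n+1) (k'+1) + X^(k'+2) * gbin (n+1) (k'+2) := gbin_succ (n+1) (k'+1)
      have e2 : gbin (n+1) (k'+1) = gbin n (k'+1) + X^(n-k') * gbin n k' := ih k' hk'
      have e3 : gbin (n+1) (k'+2) = gbin n (k'+2) + X^(n-k'-1) * gbin n (k'+1) := by
        rcases Nat.lt_or_ge k' n with h | h
        · exact ih (k'+1) (by omega)
        · have hkn : k' = n := le_antisymm hk' h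
          subst hkn
          rw [gbin_eq_zero (by omega), gbin_eq_zero (by omega), gbin_eq_zero (by omega)]
          ring
      -- target: gbin (n+2) (k'+2) = gbin (n+1) (k'+2) + X^(n+1-(k'+1)) * gbin (n+1) (k'+1)
      have e4 : gbin (n+1) (k'+2) = gbin n (k'+1) + X^(k'+2) * gbin n (k'+2) := gbin_succ n (k'+1)
      have e5 : gbin (n+1) (k'+1) = gbin n k' + X^(k'+1) * gbin n (k'+1) := gbin_succ n k'
      have hnk : n + 1 - (k'+1) = n - k' := by omega
      rw [hnk]
      rcases Nat.lt_or_ge k' n with h | h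
      · have hx : X^(k'+2) * X^(n-k'-1) = X^(n-k') * (X:R2)^(k'+1) := by
          rw [← pow_add, ← pow_add]; congr 1; omega
        linear_combination e1 + e2 + X^(k'+2)*e3 - e4 - X^(n-k')*e5 + gbin n (k'+1) * hx
      · have hkn : k' = n := le_antisymm hk' h
        subst hkn
        have hz : gbin k' (k'+1) = 0 := gbin_eq_zero (by omega)
        linear_combination e1 + e2 + X^(k'+2)*e3 - e4 - X^(k'-k')*e5
          + (X^(k'+2)*X^(k'-k'-1) - X^(k'-k')*X^(k'+1)) * hz



/-- triangular numbers -/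
def tri : ℕ → ℕ
  | 0 => 0
  | m+1 => tri m + m + 1

lemma tri_le (m : ℕ) : m ≤ tri m := by
  induction m with
  | zero => simp [tri]
  | succ m ih => rw [tri]; omega

lemma tri_strictMono : StrictMono tri := by
  apply strictMono_nat_of_lt_succ
  intro m; rw [tri]; omega

def tzz (N k : ℕ) : ℕ := if N ≤ k then tri (k - N) else tri (N - k - 1)

/-- truncated Euler product -/
def eup (M : ℕ) : R2 := ∏ i ∈ Finset.Ioc 0 M, (1 + X^i)

lemma eup_def (M : ℕ) : eup M = ∏ i ∈ Finset.Ioc 0 M, (1 + X^i) := rfl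

lemma eup_zero : eup 0 = 1 := by
  rw [eup_def, Finset.Ioc_self, Finset.prod_empty]

lemma eup_split {a b : ℕ} (h : a ≤ b) :
    eup b = eup a * ∏ i ∈ Finset.Ioc a b, (1 + X^i) :=
  (Finset.prod_Ioc_consecutive _ (Nat.zero_le a) h).symm

lemma prod_Ioc_peel {a b : ℕ} (h : a < b) (f : ℕ → R2) :
    ∏ i ∈ Finset.Ioc a b, f i = f (a+1) * ∏ i ∈ Finset.Ioc (a+1) b, f i := by
  rw [← Finset.prod_Ioc_consecutive f (by omega : a ≤ a+1) (by omega : a+1 ≤ b),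
    Nat.Ioc_succ_singleton, Finset.prod_singleton]

lemma I3 : ∀ n k : ℕ, k ≤ n → eup k * gbin n k = ∏ i ∈ Finset.Ioc (n-k) n, (1 + X^i) := by
  intro n
  induction n with
  | zero => intro k hk; interval_cases k; simp [eup, gbin_zero_right]
  | succ n ih =>
    intro k hk
    match k with
    | 0 => simp [eup, gbin_zero_right]
    | k'+1 =>
      have hk' : k' ≤ n := by omega
      rw [gbin_succ]
      have hE : eup (k'+1) = eup k' * (1 + X^(k'+1)) := by
        rw [eup_split (show k' ≤ k'+1 by omega), Nat.Ioc_succ_singleton, Finset.prod_singleton]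
      rcases Nat.lt_or_ge k' n with h | h
      · have h1 := ih k' hk'
        have h2 := ih (k'+1) (by omega)
        have hR2 : (∏ i ∈ Finset.Ioc (n-(k'+1)) n, ((1:R2) + X^i))
            = (1 + X^(n-k')) * ∏ i ∈ Finset.Ioc (n-k') n, (1 + X^i) := by
          rw [prod_Ioc_peel (show n-(k'+1) < n by omega), show n-(k'+1)+1 = n-k' by omega]
        have hR3 : (∏ i ∈ Finset.Ioc (n+1-(k'+1)) (n+1), ((1:R2) + X^i))
            = (∏ i ∈ Finset.Ioc (n-k') n, (1 + X^i)) * (1 + X^(n+1)) := by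
          rw [show n+1-(k'+1) = n - k' by omega,
            Finset.prod_Ioc_succ_top (show n-k' ≤ n by omega)]
        rw [hE, hR3]
        have hx : X^(k'+1) * X^(n-k') = (X:R2)^(n+1) := by
          rw [← pow_add]; congr 1; omega
        calc eup k' * (1 + X^(k'+1)) * (gbin n k' + X^(k'+1) * gbin n (k'+1))
            = (1 + X^(k'+1)) * (eup k' * gbin n k') + X^(k'+1) * ((eup (k'+1)) * gbin n (k'+1)) := by
              rw [hE]; ring
        _ = (1 + X^(k'+1)) * (∏ i ∈ Finset.Ioc (n-k') n, (1 + X^i))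
            + X^(k'+1) * ((1 + X^(n-k')) * ∏ i ∈ Finset.Ioc (n-k') n, (1 + X^i)) := by
              rw [h1, h2, hR2]
        _ = (∏ i ∈ Finset.Ioc (n-k') n, (1 + X^i)) * (1 + X^(n+1))
            + (X^(k'+1) + X^(k'+1)) * (∏ i ∈ Finset.Ioc (n-k') n, (1 + X^i)) := by
              rw [← hx]; ring
        _ = _ := by
          rw [CharTwo.add_self_eq_zero, zero_mul, add_zero]
      · have hkn : k' = n := le_antisymm hk' h
        subst hkn
        rw [gbin_eq_zero (show k' < k'+1 by omega), mul_zero, add_zero, gbin_diag, mul_one,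
          show k'+1-(k'+1) = 0 from by omega]
        rfl

lemma I3' : ∀ n k : ℕ, k ≤ n → eup (n-k) * gbin n k = ∏ i ∈ Finset.Ioc k n, (1 + X^i) := by
  intro n
  induction n with
  | zero => intro k hk; interval_cases k; simp [eup, gbin_zero_right]
  | succ n ih =>
    intro k hk
    match k with
    | 0 =>
      rw [gbin_zero_right, mul_one, Nat.sub_zero]; rfl
    | k'+1 =>
      have hk' : k' ≤ n := by omega
      rw [P2 n k' hk', show n+1-(k'+1) = n - k' by omega]
      rcases Nat.lt_or_ge k' n with h | h
      · have h1 := ih k' hk'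
        have h2 := ih (k'+1) (by omega)
        have hE : eup (n-k') = eup (n-(k'+1)) * (1 + X^(n-k')) := by
          rw [eup_split (show n-(k'+1) ≤ n-k' by omega), prod_Ioc_peel (show n-(k'+1) < n-k' by omega),
            show n-(k'+1)+1 = n-k' by omega, Finset.Ioc_self, Finset.prod_empty, mul_one]
        have hR : (∏ i ∈ Finset.Ioc k' n, ((1:R2) + X^i))
            = (1 + X^(k'+1)) * ∏ i ∈ Finset.Ioc (k'+1) n, (1 + X^i) := prod_Ioc_peel h _
        have hT : (∏ i ∈ Finset.Ioc (k'+1) (n+1), ((1:R2) + X^i))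
            = (∏ i ∈ Finset.Ioc (k'+1) n, (1 + X^i)) * (1 + X^(n+1)) :=
          Finset.prod_Ioc_succ_top (show k'+1 ≤ n by omega) _
        have hx : X^(n-k') * X^(k'+1) = (X:R2)^(n+1) := by
          rw [← pow_add]; congr 1; omega
        rw [hT]
        calc eup (n-k') * (gbin n (k'+1) + X^(n-k') * gbin n k')
            = (1 + X^(n-k')) * (eup (n-(k'+1)) * gbin n (k'+1)) + X^(n-k') * (eup (n-k') * gbin n k') := by
              rw [hE]; ring
        _ = (1 + X^(n-k')) * (∏ i ∈ Finset.Ioc (k'+1) n, (1 + X^i))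
            + X^(n-k') * ((1 + X^(k'+1)) * ∏ i ∈ Finset.Ioc (k'+1) n, (1 + X^i)) := by
              rw [h1, h2, hR]
        _ = (∏ i ∈ Finset.Ioc (k'+1) n, (1 + X^i)) * (1 + X^(n+1))
            + (X^(n-k') + X^(n-k')) * (∏ i ∈ Finset.Ioc (k'+1) n, (1 + X^i)) := by
              rw [← hx]; ring
        _ = _ := by rw [CharTwo.add_self_eq_zero, zero_mul, add_zero]
      · have hkn : k' = n := le_antisymm hk' h
        subst hkn
        rw [gbin_eq_zero (show k' < k'+1 by omega), gbin_diag, Finset.Ioc_self, Finset.prod_empty,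
          show k' - k' = 0 from by omega]
        simp [eup]

lemma HIGH (d : ℕ) : ∀ (s : Finset ℕ), (∀ i ∈ s, d ≤ i) →
    ∃ g : R2, ∏ i ∈ s, (1 + X^i) = 1 + X^d * g := by
  intro s
  induction s using Finset.induction_on with
  | empty => exact fun _ => ⟨0, by simp⟩
  | insert _ _ hnotmem =>
    rename_i a s' ih
    intro hb
    obtain ⟨g, hg⟩ := ih (fun i hi => hb i (Finset.mem_insert_of_mem hi))
    have ha : d ≤ a := hb a (Finset.mem_insert_self a s')
    refine ⟨g + X^(a-d) + X^a * g, ?_⟩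
    rw [Finset.prod_insert hnotmem, hg]
    have hxa : X^(a-d) * X^d = (X:R2)^a := by rw [← pow_add]; congr 1; omega
    calc (1 + X^a) * (1 + X^d * g) = 1 + X^d * g + X^(a-d) * X^d + X^a * (X^d * g) := by
          rw [hxa]; ring
    _ = _ := by ring

lemma coeff_one_add_highmul {d n : ℕ} (g : R2) (h : n < d) :
    ((1 : R2) + X^d * g).coeff n = if n = 0 then 1 else 0 := by
  have h1 : (X^d * g).coeff n = 0 := by
    rw [mul_comm, Polynomial.coeff_mul_X_pow', if_neg (show ¬ d ≤ n by omega)]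
  rw [Polynomial.coeff_add, h1, add_zero, Polynomial.coeff_one]

lemma EB_low {N k n : ℕ} (hk : k ≤ 2*N) (hn : n < N) :
    (X^(tzz N k) * (eup N * gbin (2*N) k)).coeff n = if n = tzz N k then 1 else 0 := by
  rcases Nat.lt_or_ge n (tzz N k) with h | h
  · rw [mul_comm, Polynomial.coeff_mul_X_pow', if_neg (by omega), if_neg (by omega)]
  · rw [mul_comm, Polynomial.coeff_mul_X_pow', if_pos (by omega)]
    have key : ∃ (d : ℕ) (g : R2), n - tzz N k < d ∧ eup N * gbin (2*N) k = 1 + X^d * g := by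
      rcases le_or_gt k N with hkN | hkN
      · -- k ≤ N
        obtain ⟨g1, hg1⟩ := HIGH (k+1) (Finset.Ioc (2*N-k) (2*N)) (fun i hi => by
          have := (Finset.mem_Ioc.mp hi).1; omega)
        obtain ⟨g2, hg2⟩ := HIGH (k+1) (Finset.Ioc k N) (fun i hi => by
          have := (Finset.mem_Ioc.mp hi).1; omega)
        refine ⟨k+1, g1 + g2 + X^(k+1) * (g1*g2), ?_, ?_⟩
        · -- n - tzz N k < k + 1, since N ≤ tzz N k + k + 1
          have htz : N ≤ tzz N k + k + 1 := by
            unfold tzz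
            split
            · omega
            · have := tri_le (N - k - 1); omega
          omega
        · calc eup N * gbin (2*N) k = (eup k * gbin (2*N) k) * ∏ i ∈ Finset.Ioc k N, (1+X^i) := by
                rw [eup_split hkN]; ring
          _ = (1 + X^(k+1) * g1) * (1 + X^(k+1) * g2) := by
                rw [I3 (2*N) k (by omega), show 2*N - k = 2*N-k from rfl, hg1, hg2]
          _ = _ := by ring
      · -- N < k ≤ 2N
        obtain ⟨g1, hg1⟩ := HIGH (2*N-k+1) (Finset.Ioc k (2*N)) (fun i hi => by
          have := (Finset.mem_Ioc.mp hi).1; omega)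
        obtain ⟨g2, hg2⟩ := HIGH (2*N-k+1) (Finset.Ioc (2*N-k) N) (fun i hi => by
          have := (Finset.mem_Ioc.mp hi).1; omega)
        refine ⟨2*N-k+1, g1 + g2 + X^(2*N-k+1) * (g1*g2), ?_, ?_⟩
        · have htz : k - N ≤ tzz N k := by
            unfold tzz
            rw [if_pos (by omega)]
            exact tri_le (k - N)
          omega
        · calc eup N * gbin (2*N) k = (eup (2*N-k) * gbin (2*N) k) * ∏ i ∈ Finset.Ioc (2*N-k) N, (1+X^i) := by
                rw [eup_split (show 2*N-k ≤ N by omega)]; ring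
          _ = (1 + X^(2*N-k+1) * g1) * (1 + X^(2*N-k+1) * g2) := by
                rw [I3' (2*N) k (by omega), hg1, hg2]
          _ = _ := by ring
    obtain ⟨d, g, hd, hEB⟩ := key
    rw [hEB, coeff_one_add_highmul g hd]
    congr 1
    simp only [eq_iff_iff]
    omega

lemma STAB {n a b : ℕ} (P : R2) (hna : n ≤ a) (hab : a ≤ b) :
    (P * eup b).coeff n = (P * eup a).coeff n := by
  obtain ⟨g, hg⟩ := HIGH (a+1) (Finset.Ioc a b) (fun i hi => by
    have := (Finset.mem_Ioc.mp hi).1; omega)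
  rw [eup_split hab, hg]
  have h1 : P * (eup a * (1 + X^(a+1) * g)) = P * eup a + (P * eup a * g) * X^(a+1) := by ring
  rw [← mul_assoc, mul_assoc P, h1, Polynomial.coeff_add,
    Polynomial.coeff_mul_X_pow', if_neg (show ¬ a+1 ≤ n by omega), add_zero]



lemma tri_succ (m : ℕ) : tri (m+1) = tri m + m + 1 := rfl

lemma E3tz (N k : ℕ) : tzz (N+1) (k+2) = tzz N (k+1) := by
  unfold tzz
  rcases le_or_gt N (k+1) with h | h
  · rw [if_pos (by omega), if_pos (by omega), show k+2-(N+1) = k+1-N by omega]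
  · rw [if_neg (by omega), if_neg (by omega), show N+1-(k+2)-1 = N-(k+1)-1 by omega]

lemma E1tz (N k : ℕ) : tzz (N+1) (k+2) + (k+2) = N + tzz N (k+2) := by
  unfold tzz
  rcases le_or_gt (N+1) (k+2) with h | h
  · rw [if_pos h, if_pos (by omega), show k+2-N = (k+1-N)+1 by omega, tri_succ,
      show k+2-(N+1) = k+1-N by omega]
    generalize tri (k+1-N) = TTri
    omega
  · rw [if_neg (by omega)]
    rcases le_or_gt N (k+2) with h2 | h2
    · rw [if_pos h2, show N+1-(k+2)-1 = 0 by omega, show k+2-N = 0 by omega]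
      show tri 0 + (k+2) = N + tri 0
      show 0 + (k+2) = N + 0
      omega
    · rw [if_neg (by omega), show N+1-(k+2)-1 = (N-(k+2)-1)+1 by omega, tri_succ]
      generalize tri (N-(k+2)-1) = TTri
      omega

lemma E2tz (N k : ℕ) (hk : k ≤ 2*N) : tzz (N+1) (k+2) + (2*N-k) = (N+1) + tzz N k := by
  unfold tzz
  rcases le_or_gt (N+1) (k+2) with h | h
  · rw [if_pos h]
    rcases le_or_gt N k with h2 | h2
    · rw [if_pos h2, show k+2-(N+1) = (k-N)+1 by omega, tri_succ]
      generalize tri (k-N) = TTri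
      omega
    · -- N+1 ≤ k+2 and k < N: k+1 = N or k+2 = N+1 i.e. k = N-1
      rw [if_neg (by omega), show k+2-(N+1) = 0 by omega, show N-k-1 = 0 by omega]
      show tri 0 + (2*N-k) = N+1 + tri 0
      show 0 + (2*N-k) = N+1 + 0
      omega
  · rw [if_neg (by omega), if_neg (by omega), show N-k-1 = (N+1-(k+2)-1)+1 by omega, tri_succ]
    generalize tri (N+1-(k+2)-1) = TTri
    omega

lemma E0tz (N : ℕ) : tzz (N+1) 0 = tzz N 0 + N := by
  unfold tzz
  rcases Nat.eq_zero_or_pos N with h | h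
  · subst h; rw [if_neg (by omega), if_pos (by omega)]
    show tri 0 = tri 0 + 0
    omega
  · rw [if_neg (by omega), if_neg (by omega), show N+1-0-1 = (N-0-1)+1 by omega, tri_succ]
    generalize tri (N-0-1) = TTri
    omega

lemma Etz1 (N : ℕ) : tzz (N+1) 1 = tzz N 0 := by
  unfold tzz
  rcases Nat.eq_zero_or_pos N with h | h
  · subst h; rw [if_pos (by omega), if_pos (by omega)]
  · rw [if_neg (by omega), if_neg (by omega), show N+1-1-1 = N-0-1 by omega]

lemma Etz2 (N : ℕ) : tzz N 1 + N = tzz N 0 + 1 := by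
  unfold tzz
  rcases le_or_gt N 1 with h | h
  · interval_cases N <;> rfl
  · rw [if_neg (by omega), if_neg (by omega), show N-0-1 = (N-1-1)+1 by omega, tri_succ]
    generalize tri (N-1-1) = TTri
    omega

lemma PB2 (m k : ℕ) : gbin (m+2) (k+2)
    = X^(k+2) * gbin m (k+2) + (1+X^(m+1)) * gbin m (k+1) + X^(m-k) * gbin m k := by
  rcases le_or_gt k m with h | h
  · have h1 : gbin (m+2) (k+2) = gbin (m+1) (k+2) + X^(m-k) * gbin (m+1) (k+1) := by
      have := P2 (m+1) (k+1) (by omega)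
      rwa [show m+1-(k+1) = m-k by omega] at this
    have h2 : gbin (m+1) (k+2) = gbin m (k+1) + X^(k+2) * gbin m (k+2) := gbin_succ m (k+1)
    have h3 : gbin (m+1) (k+1) = gbin m k + X^(k+1) * gbin m (k+1) := gbin_succ m k
    have hx : X^(m-k) * X^(k+1) = (X:R2)^(m+1) := by
      rw [← pow_add]; congr 1; omega
    rw [h1, h2, h3]
    linear_combination (gbin m (k+1)) * hx
  · rw [gbin_eq_zero (show m+2 < k+2 by omega), gbin_eq_zero (show m < k+2 by omega),
      gbin_eq_zero (show m < k+1 by omega), gbin_eq_zero h]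
    ring

lemma T1B (M : ℕ) : gbin (M+2) 1 = X * gbin M 1 + 1 + X^(M+1) := by
  have h1 : gbin (M+2) 1 = gbin (M+1) 0 + X^1 * gbin (M+1) 1 := gbin_succ (M+1) 0
  have h2 : gbin (M+1) 1 = gbin M 0 + X^1 * gbin M 1 := gbin_succ M 0
  rw [gbin_zero_right] at h1 h2
  rw [h1, h2]
  linear_combination X * (L1 M)

/-- outer variable -/
def xx : Polynomial R2 := Polynomial.X
def qe (e : ℕ) : Polynomial R2 := Polynomial.C ((X : R2)^e)

def asc (M : ℕ) : Polynomial R2 := ∏ i ∈ Finset.range M, (1 + qe (i+1) * xx)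
def dsc (M : ℕ) : Polynomial R2 := ∏ i ∈ Finset.range M, (xx + qe i)
def sm (N k : ℕ) : Polynomial R2 := Polynomial.C ((X:R2)^(tzz N k) * gbin (2*N) k)
def SJac (N : ℕ) : Polynomial R2 := ∑ k ∈ Finset.range (2*N+1), sm N k * xx^k

lemma qe_mul (a b : ℕ) : qe a * qe b = qe (a+b) := by
  rw [qe, qe, qe, ← Polynomial.C_mul, ← pow_add]

lemma sm_zero {N k : ℕ} (h : 2*N < k) : sm N k = 0 := by
  rw [sm, gbin_eq_zero h, mul_zero, Polynomial.C_0]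

lemma sm_PT (N k : ℕ) :
    sm (N+1) (k+2) = sm N (k+2) * qe N + (1 + qe (2*N+1)) * sm N (k+1) + qe (N+1) * sm N k := by
  rw [sm, sm, sm, sm, show 2*(N+1) = 2*N+2 by omega, PB2 (2*N) k]
  have hA : (X:R2)^(tzz (N+1) (k+2)) * (X^(k+2) * gbin (2*N) (k+2))
      = ((X:R2)^(tzz N (k+2)) * gbin (2*N) (k+2)) * X^N := by
    rw [← mul_assoc, ← pow_add, E1tz N k, pow_add]
    ring
  have hB : (X:R2)^(tzz (N+1) (k+2)) * ((1+X^(2*N+1)) * gbin (2*N) (k+1))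
      = (1+X^(2*N+1)) * ((X:R2)^(tzz N (k+1)) * gbin (2*N) (k+1)) := by
    rw [E3tz N k]; ring
  have hC : (X:R2)^(tzz (N+1) (k+2)) * (X^(2*N-k) * gbin (2*N) k)
      = (X:R2)^(N+1) * ((X:R2)^(tzz N k) * gbin (2*N) k) := by
    rcases le_or_gt k (2*N) with h | h
    · rw [← mul_assoc, ← pow_add, E2tz N k h, ← mul_assoc, ← pow_add]
    · rw [gbin_eq_zero h, mul_zero, mul_zero, mul_zero, mul_zero]
  rw [mul_add, mul_add, hA, hB, hC]
  simp only [Polynomial.C_add, Polynomial.C_mul, Polynomial.C_1, qe]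
  try ring

lemma sm_0 (N : ℕ) : sm (N+1) 0 = sm N 0 * qe N := by
  rw [sm, sm, show 2*(N+1) = 2*N+2 by omega, gbin_zero_right, gbin_zero_right, mul_one, mul_one,
    qe, ← Polynomial.C_mul, ← pow_add, E0tz N]

lemma sm_1 (N : ℕ) : sm (N+1) 1 = sm N 1 * qe N + (1 + qe (2*N+1)) * sm N 0 := by
  rw [sm, sm, sm, show 2*(N+1) = 2*N+2 by omega, gbin_zero_right, mul_one, qe, qe]
  rw [show (1 : Polynomial R2) + Polynomial.C ((X:R2)^(2*N+1))
      = Polynomial.C (1 + (X:R2)^(2*N+1)) by rw [Polynomial.C_add, Polynomial.C_1]]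
  rw [← Polynomial.C_mul, ← Polynomial.C_mul, ← Polynomial.C_add]
  congr 1
  rw [T1B (2*N), Etz1 N]
  have hx : (X:R2)^(tzz N 0) * X = X^(tzz N 1) * X^N := by
    rw [← pow_succ, ← pow_add, Etz2 N]
  linear_combination (gbin (2*N) 1) * hx

lemma I4 : ∀ N, asc N * dsc N = SJac N := by
  intro N
  induction N with
  | zero =>
    show (1 : Polynomial R2) * 1 = _
    rw [SJac]
    simp only [show 2*0+1 = 1 from rfl, Finset.range_one, Finset.sum_singleton, pow_zero,
      mul_one, one_mul, sm]
    rw [show tzz 0 0 = 0 from rfl, pow_zero, show 2*0 = 0 from rfl, gbin_zero_right, one_mul,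
      Polynomial.C_1]
  | succ N ih =>
    have hasc : asc (N+1) = asc N * (1 + qe (N+1) * xx) := Finset.prod_range_succ _ _
    have hdsc : dsc (N+1) = dsc N * (xx + qe N) := Finset.prod_range_succ _ _
    have hM : (1 + qe (N+1) * xx) * (xx + qe N)
        = qe N + (1 + qe (2*N+1)) * xx + qe (N+1) * xx^2 := by
      have := qe_mul (N+1) N
      rw [show N+1+N = 2*N+1 by omega] at this
      linear_combination xx * this
    have key : SJac N * ((1 + qe (N+1) * xx) * (xx + qe N)) = SJac (N+1) := by
      rw [hM]
      have hext : SJac N = ∑ k ∈ Finset.range (2*N+3), sm N k * xx^k := by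
        rw [SJac, Finset.sum_range_succ (fun k => sm N k * xx^k) (2*N+2),
          Finset.sum_range_succ (fun k => sm N k * xx^k) (2*N+1)]
        simp only [sm_zero (show 2*N < 2*N+1 by omega), sm_zero (show 2*N < 2*N+2 by omega),
          zero_mul, add_zero]
      rw [hext, Finset.sum_mul]
      have hterm : ∀ k ∈ Finset.range (2*N+3),
          sm N k * xx^k * (qe N + (1 + qe (2*N+1)) * xx + qe (N+1) * xx^2)
          = sm N k * qe N * xx^k + (1 + qe (2*N+1)) * sm N (k+1-1) * xx^(k+1)
            + qe (N+1) * sm N k * xx^(k+2) := by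
        intro k _
        rw [show k+1-1 = k by omega, pow_succ, show k+2 = (k+1)+1 by omega, pow_succ, pow_succ]
        ring
      rw [Finset.sum_congr rfl hterm, Finset.sum_add_distrib, Finset.sum_add_distrib]
      have hS1 : SJac (N+1) = ∑ k ∈ Finset.range (2*N+3), sm (N+1) k * xx^k := by
        rw [SJac, show 2*(N+1)+1 = 2*N+3 by omega]
      rw [hS1, Finset.sum_range_succ' (fun k => sm (N+1) k * xx^k) (2*N+2),
        Finset.sum_range_succ' (fun k => sm (N+1) (k+1) * xx^(k+1)) (2*N+1)]
      have hext2 : ∑ k ∈ Finset.range (2*N+1), sm (N+1) (k+1+1) * xx^(k+1+1)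
          = ∑ k ∈ Finset.range (2*N+3), sm (N+1) (k+2) * xx^(k+2) := by
        rw [Finset.sum_range_succ (fun k => sm (N+1) (k+2) * xx^(k+2)) (2*N+2),
          Finset.sum_range_succ (fun k => sm (N+1) (k+2) * xx^(k+2)) (2*N+1)]
        simp only [sm_zero (show 2*(N+1) < 2*N+1+2 by omega),
          sm_zero (show 2*(N+1) < 2*N+2+2 by omega), zero_mul, add_zero]
      rw [hext2]
      -- decompose the main sum
      have hmain : ∑ k ∈ Finset.range (2*N+3), sm (N+1) (k+2) * xx^(k+2)
          = ∑ k ∈ Finset.range (2*N+3), (sm N (k+2) * qe N * xx^(k+2)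
            + (1 + qe (2*N+1)) * sm N (k+1) * xx^(k+2) + qe (N+1) * sm N k * xx^(k+2)) := by
        refine Finset.sum_congr rfl fun k _ => ?_
        rw [sm_PT N k]; ring
      rw [hmain, Finset.sum_add_distrib, Finset.sum_add_distrib]
      -- match the three pairs of sums and the boundary terms
      have m1 : ∑ k ∈ Finset.range (2*N+3), sm N k * qe N * xx^k
          = (∑ k ∈ Finset.range (2*N+3), sm N (k+2) * qe N * xx^(k+2))
            + sm N 1 * qe N * xx^1 + sm N 0 * qe N * xx^0 := by
        rw [Finset.sum_range_succ' (fun k => sm N k * qe N * xx^k) (2*N+2),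
          Finset.sum_range_succ' (fun k => sm N (k+1) * qe N * xx^(k+1)) (2*N+1),
          Finset.sum_range_succ (fun k => sm N (k+2) * qe N * xx^(k+2)) (2*N+2),
          Finset.sum_range_succ (fun k => sm N (k+2) * qe N * xx^(k+2)) (2*N+1)]
        simp only [sm_zero (show 2*N < 2*N+1+2 by omega), sm_zero (show 2*N < 2*N+2+2 by omega),
          zero_mul, add_zero]
      have m2 : ∑ k ∈ Finset.range (2*N+3), (1 + qe (2*N+1)) * sm N (k+1-1) * xx^(k+1)
          = (∑ k ∈ Finset.range (2*N+3), (1 + qe (2*N+1)) * sm N (k+1) * xx^(k+2))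
            + (1 + qe (2*N+1)) * sm N 0 * xx^1 := by
        rw [Finset.sum_range_succ' (fun k => (1 + qe (2*N+1)) * sm N (k+1-1) * xx^(k+1)) (2*N+2),
          Finset.sum_range_succ (fun k => (1 + qe (2*N+1)) * sm N (k+1) * xx^(k+2)) (2*N+2)]
        simp only [show ∀ k:ℕ, k+1+1-1 = k+1 from fun k => rfl, show (0:ℕ)+1-1 = 0 from rfl,
          sm_zero (show 2*N < 2*N+2+1 by omega), mul_zero, zero_mul, add_zero]
      rw [m1, m2]
      rw [sm_0 N, sm_1 N]
      ring
    rw [hasc, hdsc, show asc N * (1 + qe (N+1) * xx) * (dsc N * (xx + qe N))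
      = (asc N * dsc N) * ((1 + qe (N+1) * xx) * (xx + qe N)) by ring, ih, key]

lemma eup_succ (M : ℕ) : eup (M+1) = eup M * (1 + X^(M+1)) := by
  rw [eup_split (Nat.le_succ M), Nat.Ioc_succ_singleton, Finset.prod_singleton]

lemma eup_range (M : ℕ) : ∏ i ∈ Finset.range M, ((1:R2) + X^(i+1)) = eup M := by
  induction M with
  | zero => rw [Finset.range_zero, Finset.prod_empty, eup_zero]
  | succ M ih => rw [Finset.prod_range_succ, ih, eup_succ]

lemma natCast_R2 (k : ℕ) : (k : R2) = if Odd k then 1 else 0 := by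
  rcases Nat.even_or_odd k with ⟨m, hm⟩ | ⟨m, hm⟩
  · subst hm
    rw [if_neg (by simp [Nat.odd_iff, Nat.even_iff]; omega)]
    push_cast
    rw [show (m : R2) + m = (1+1) * m by ring, CharTwo.add_self_eq_zero, zero_mul]
  · subst hm
    rw [if_pos ⟨m, rfl⟩]
    push_cast
    rw [show (2:R2) * m + 1 = (1+1) * m + 1 by ring, CharTwo.add_self_eq_zero, zero_mul, zero_add]

lemma JN (N : ℕ) : eup (N+1) * eup N
    = ∑ k ∈ Finset.range (2*N+3),
        (if Odd k then (X:R2)^(tzz (N+1) k) * gbin (2*N+2) k else 0) := by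
  have h4 := I4 (N+1)
  -- left side
  have hdsc : dsc (N+1) = (∏ i ∈ Finset.range N, (xx + qe (i+1))) * (xx + qe 0) :=
    Finset.prod_range_succ' _ _
  have hqe0 : qe 0 = 1 := by rw [qe, pow_zero, Polynomial.C_1]
  have hfact : asc (N+1) * dsc (N+1)
      = (asc (N+1) * ∏ i ∈ Finset.range N, (xx + qe (i+1))) * (xx + 1) := by
    rw [hdsc, hqe0]; ring
  have hL : Polynomial.eval 1 (Polynomial.derivative (asc (N+1) * dsc (N+1)))
      = eup (N+1) * eup N := by
    rw [hfact, Polynomial.derivative_mul]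
    have hdx : Polynomial.derivative (xx + 1) = 1 := by
      rw [xx, Polynomial.derivative_add, Polynomial.derivative_X, Polynomial.derivative_one,
        add_zero]
    rw [hdx, mul_one, Polynomial.eval_add, Polynomial.eval_mul, Polynomial.eval_add,
      Polynomial.eval_one, xx, Polynomial.eval_X]
    rw [show (1 : R2) + 1 = 0 from CharTwo.add_self_eq_zero 1, mul_zero, zero_add,
      Polynomial.eval_mul]
    congr 1
    · rw [asc, Polynomial.eval_prod, ← eup_range (N+1)]
      refine Finset.prod_congr rfl fun i _ => ?_
      rw [Polynomial.eval_add, Polynomial.eval_one, Polynomial.eval_mul, qe, xx,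
        Polynomial.eval_C, Polynomial.eval_X, mul_one]
    · rw [Polynomial.eval_prod, ← eup_range N]
      refine Finset.prod_congr rfl fun i _ => ?_
      simp [qe, xx, add_comm]
  -- right side
  have hR : Polynomial.eval 1 (Polynomial.derivative (SJac (N+1)))
      = ∑ k ∈ Finset.range (2*N+3),
        (if Odd k then (X:R2)^(tzz (N+1) k) * gbin (2*N+2) k else 0) := by
    rw [SJac, show 2*(N+1)+1 = 2*N+3 by omega, Polynomial.derivative_sum, Polynomial.eval_finset_sum]
    refine Finset.sum_congr rfl fun k _ => ?_
    rw [sm, xx, show 2*(N+1) = 2*N+2 by omega, Polynomial.derivative_C_mul_X_pow,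
      Polynomial.eval_mul, Polynomial.eval_C, Polynomial.eval_pow, Polynomial.eval_X, one_pow,
      mul_one, natCast_R2 k]
    split_ifs <;> simp
  rw [← hL, ← hR, h4]

lemma TRI {M n : ℕ} (hn : n < M) :
    (Finset.filter (fun k => Odd k ∧ tzz M k = n) (Finset.range (2*M+1))).card
      = if ∃ m, n = tri m then 1 else 0 := by
  by_cases h : ∃ m, n = tri m
  · obtain ⟨m, rfl⟩ := h
    rw [if_pos ⟨m, rfl⟩]
    have hm : m < M := lt_of_le_of_lt (tri_le m) hn
    rw [Finset.card_eq_one]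
    by_cases hp : Odd (M+m)
    · refine ⟨M+m, Finset.eq_singleton_iff_unique_mem.mpr ⟨?_, ?_⟩⟩
      · rw [Finset.mem_filter, Finset.mem_range]
        refine ⟨by omega, hp, ?_⟩
        rw [tzz, if_pos (by omega), show M+m-M = m by omega]
      · intro k hk
        rw [Finset.mem_filter, Finset.mem_range] at hk
        obtain ⟨hr, hodd, htz⟩ := hk
        rw [tzz] at htz
        split_ifs at htz with hMk
        · have := tri_strictMono.injective htz
          omega
        · have := tri_strictMono.injective htz
          -- k = M - m - 1, but then k and M+m have opposite parity: contradiction with hp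
          have hk' : k = M - m - 1 := by omega
          exfalso
          rw [Nat.odd_iff] at hodd hp
          omega
    · refine ⟨M-m-1, Finset.eq_singleton_iff_unique_mem.mpr ⟨?_, ?_⟩⟩
      · rw [Finset.mem_filter, Finset.mem_range]
        refine ⟨by omega, ?_, ?_⟩
        · rw [Nat.odd_iff]
          rw [Nat.odd_iff] at hp
          omega
        · rw [tzz, if_neg (by omega), show M-(M-m-1)-1 = m by omega]
      · intro k hk
        rw [Finset.mem_filter, Finset.mem_range] at hk
        obtain ⟨hr, hodd, htz⟩ := hk
        rw [tzz] at htz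
        split_ifs at htz with hMk
        · have := tri_strictMono.injective htz
          exfalso
          rw [Nat.odd_iff] at hodd hp
          omega
        · have := tri_strictMono.injective htz
          omega
  · rw [if_neg h, Finset.card_eq_zero, Finset.filter_eq_empty_iff]
    intro k _
    rintro ⟨hodd, htz⟩
    rw [tzz] at htz
    split_ifs at htz with hMk
    · exact h ⟨k-M, htz.symm⟩
    · exact h ⟨M-k-1, htz.symm⟩

lemma CRUX {n M : ℕ} (hnM : n ≤ M) :
    (eup M ^ 3).coeff n = if ∃ m, n = tri m then 1 else 0 := by
  have step1 : (eup M ^ 3).coeff n = ((eup n * eup n) * eup n).coeff n := by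
    rw [show eup M ^ 3 = (eup M * eup M) * eup M by ring, STAB (eup M * eup M) le_rfl hnM,
      show (eup M * eup M) * eup n = (eup M * eup n) * eup M by ring, STAB (eup M * eup n) le_rfl hnM,
      show (eup M * eup n) * eup n = (eup n * eup n) * eup M by ring, STAB (eup n * eup n) le_rfl hnM]
  have step2 : ((eup (n+1) * eup (n+1)) * eup n).coeff n = ((eup n * eup n) * eup n).coeff n := by
    rw [show (eup (n+1) * eup (n+1)) * eup n = (eup (n+1) * eup n) * eup (n+1) by ring,
      STAB (eup (n+1) * eup n) le_rfl (by omega),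
      show (eup (n+1) * eup n) * eup n = (eup n * eup n) * eup (n+1) by ring,
      STAB (eup n * eup n) le_rfl (by omega)]
  rw [step1, ← step2]
  have hJ := congrArg (fun P => (P * eup (n+1)).coeff n) (JN n)
  rw [show eup (n+1) * eup (n+1) * eup n = eup (n+1) * eup n * eup (n+1) by ring, hJ,
    Finset.sum_mul, Polynomial.finset_sum_coeff]
  have hterm : ∀ k ∈ Finset.range (2*n+3),
      ((if Odd k then (X:R2)^(tzz (n+1) k) * gbin (2*n+2) k else 0) * eup (n+1)).coeff n
      = if (Odd k ∧ tzz (n+1) k = n) then 1 else 0 := by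
    intro k hk
    rw [Finset.mem_range] at hk
    rw [ite_mul, zero_mul]
    rw [apply_ite (fun P : Polynomial (ZMod 2) => P.coeff n), Polynomial.coeff_zero]
    by_cases hodd : Odd k
    · rw [if_pos hodd]
      have hshape : (X:R2)^(tzz (n+1) k) * gbin (2*n+2) k * eup (n+1)
          = X^(tzz (n+1) k) * (eup (n+1) * gbin (2*(n+1)) k) := by
        rw [show 2*(n+1) = 2*n+2 by omega]; ring
      rw [hshape, EB_low (show k ≤ 2*(n+1) by omega) (show n < n+1 by omega)]
      by_cases he : n = tzz (n+1) k
      · rw [if_pos he, if_pos ⟨hodd, he.symm⟩]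
      · rw [if_neg he, if_neg (by tauto)]
    · rw [if_neg hodd, if_neg (by tauto)]
  rw [Finset.sum_congr rfl hterm, Finset.sum_boole]
  have := TRI (show n < n+1 by omega)
  rw [show 2*(n+1)+1 = 2*n+3 by omega] at this
  rw [this]
  split_ifs <;> simp


lemma FROB2 (f : R2) : Polynomial.expand (ZMod 2) 2 f = f^2 := by
  have h := Polynomial.map_frobenius_expand (R := ZMod 2) (p := 2) f
  rwa [ZMod.frobenius_zmod, Polynomial.map_id] at h

lemma FROB8 (f : R2) : f ^ 8 = Polynomial.expand (ZMod 2) 8 f := by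
  calc f ^ 8 = ((f^2)^2)^2 := by ring
  _ = Polynomial.expand (ZMod 2) 2 (Polynomial.expand (ZMod 2) 2 (Polynomial.expand (ZMod 2) 2 f)) := by
      rw [FROB2, FROB2, FROB2]
  _ = Polynomial.expand (ZMod 2) 8 f := by
      rw [Polynomial.expand_expand, Polynomial.expand_expand]
      try norm_num

lemma eup_eq_Icc (M : ℕ) : eup M = ∏ k ∈ Finset.Icc 1 M, (1 + X^k) := by
  have h : Finset.Icc 1 M = Finset.Ioc 0 M := by
    ext i; simp [Finset.mem_Icc, Finset.mem_Ioc]; omega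
  rw [h, eup_def]

lemma SQT (m : ℕ) : (2*m+1)^2 = 8 * tri m + 1 := by
  induction m with
  | zero => rfl
  | succ m ih =>
    have h1 : (2*(m+1)+1)^2 = (2*m+1)^2 + 4*(2*m+1) + 4 := by ring
    rw [h1, tri_succ, ih]
    ring

lemma tau_mod2 (n : ℕ) :
    ((tau n : ℤ) : ZMod 2) = if ∃ m, n = (2*m+1)^2 then 1 else 0 := by
  set φ : ℤ →+* ZMod 2 := Int.castRingHom (ZMod 2) with hφ
  have hcast : ((tau n : ℤ) : ZMod 2)
      = (Polynomial.map φ (Polynomial.X * ∏ k ∈ Finset.Icc 1 n, (1 - Polynomial.X ^ k) ^ 24)).coeff n := by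
    rw [Polynomial.coeff_map]; rfl
  have hmap : Polynomial.map φ (Polynomial.X * ∏ k ∈ Finset.Icc 1 n, (1 - Polynomial.X ^ k) ^ 24)
      = X * eup n ^ 24 := by
    rw [Polynomial.map_mul, Polynomial.map_X, Polynomial.map_prod]
    rw [eup_eq_Icc, ← Finset.prod_pow]
    congr 1
    refine Finset.prod_congr rfl fun k _ => ?_
    rw [Polynomial.map_pow, Polynomial.map_sub, Polynomial.map_one, Polynomial.map_pow,
      Polynomial.map_X]
    congr 1
    rw [CharTwo.sub_eq_add]
  rw [hcast, hmap]
  have h24 : eup n ^ 24 = Polynomial.expand (ZMod 2) 8 (eup n ^ 3) := by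
    rw [← FROB8, ← pow_mul]
  rw [h24]
  cases n with
  | zero =>
    rw [Polynomial.mul_coeff_zero, Polynomial.coeff_X_zero, zero_mul]
    rw [if_neg]
    rintro ⟨m, hm⟩
    have : 0 < (2*m+1)^2 := by positivity
    omega
  | succ n' =>
    rw [Polynomial.coeff_X_mul, Polynomial.coeff_expand (by norm_num : 0 < 8)]
    by_cases hdvd : 8 ∣ n'
    · rw [if_pos hdvd, CRUX (show n'/8 ≤ n'+1 from le_trans (Nat.div_le_self _ _) (by omega))]
      congr 1
      rw [eq_iff_iff]
      constructor
      · rintro ⟨m, hm⟩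
        refine ⟨m, ?_⟩
        have : n' = 8 * tri m := by
          obtain ⟨c, hc⟩ := hdvd
          omega
        rw [SQT]
        omega
      · rintro ⟨m, hm⟩
        refine ⟨m, ?_⟩
        rw [SQT] at hm
        omega
    · rw [if_neg hdvd, if_neg]
      rintro ⟨m, hm⟩
      rw [SQT] at hm
      exact hdvd ⟨tri m, by omega⟩





def isOddSq (i : ℕ) : Prop := ∃ m : ℕ, i = (2*m+1)^2

def ind2 (i : ℕ) : ZMod 2 := if isOddSq i then 1 else 0

def psi2 : PowerSeries (ZMod 2) := PowerSeries.mk ind2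

lemma map_Delta : PowerSeries.map (Int.castRingHom (ZMod 2)) Delta = psi2 := by
  ext n
  rw [PowerSeries.coeff_map, Delta, psi2, PowerSeries.coeff_mk, PowerSeries.coeff_mk]
  exact tau_mod2 n

lemma posodd_sq {a : ℤ} (h0 : 0 < a) (hodd : Odd a) :
    ∃ m : ℕ, a = ((2*m+1 : ℕ) : ℤ) ∧ (a^2).toNat = (2*m+1)^2 := by
  obtain ⟨j, hj⟩ := hodd
  have hj0 : 0 ≤ j := by omega
  refine ⟨j.toNat, ?_, ?_⟩
  · push_cast; omega
  · have ha : a = ((2*j.toNat+1 : ℕ) : ℤ) := by push_cast; omega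
    rw [ha, ← Nat.cast_pow, Int.toNat_natCast]

lemma sqrtQ {s : ℕ} (h : isOddSq s) :
    0 < (Nat.sqrt s : ℤ) ∧ Odd (Nat.sqrt s : ℤ) ∧ ((Nat.sqrt s : ℤ))^2 = (s : ℤ) := by
  obtain ⟨m, rfl⟩ := h
  rw [Nat.sqrt_eq']
  refine ⟨by positivity, ⟨m, by push_cast; ring⟩, by push_cast; ring⟩

def TT0 (n : ℕ) : Finset (ℕ × ℕ × ℕ) :=
  ((Finset.range (n+1)) ×ˢ ((Finset.range (n+1)) ×ˢ (Finset.range (n+1)))).filter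
    (fun tri => tri.1 + tri.2.1 + tri.2.2 = n)

def TTri (n : ℕ) : Finset (ℕ × ℕ × ℕ) :=
  (TT0 n).filter (fun tri => isOddSq tri.1 ∧ isOddSq tri.2.1 ∧ isOddSq tri.2.2)

lemma mem_T {n : ℕ} {x : ℕ × ℕ × ℕ} :
    x ∈ TTri n ↔ (x.1 + x.2.1 + x.2.2 = n ∧ isOddSq x.1 ∧ isOddSq x.2.1 ∧ isOddSq x.2.2) := by
  simp only [TTri, TT0, Finset.mem_filter, Finset.mem_product, Finset.mem_range]
  constructor
  · rintro ⟨⟨_, h⟩, hq⟩; exact ⟨h, hq⟩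
  · rintro ⟨h, hq⟩; exact ⟨⟨⟨by omega, by omega, by omega⟩, h⟩, hq⟩

lemma q3_card (n : ℕ) : q3 n = (TTri n).card := by
  rw [q3, ← Fintype.card_coe, ← Nat.card_eq_fintype_card]
  refine Nat.card_congr ?_
  refine
    { toFun := fun tri => ⟨((tri.1.1^2).toNat, (tri.1.2.1^2).toNat, (tri.1.2.2^2).toNat), ?_⟩
      invFun := fun x => ⟨((Nat.sqrt x.1.1 : ℤ), (Nat.sqrt x.1.2.1 : ℤ), (Nat.sqrt x.1.2.2 : ℤ)), ?_⟩
      left_inv := ?_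
      right_inv := ?_ }
  · obtain ⟨⟨a, b, c⟩, h1, h2, h3, h4, h5, h6, h7⟩ := tri
    simp only at *
    rw [mem_T]
    obtain ⟨m1, hm1, hs1⟩ := posodd_sq h1 h2
    obtain ⟨m2, hm2, hs2⟩ := posodd_sq h3 h4
    obtain ⟨m3, hm3, hs3⟩ := posodd_sq h5 h6
    refine ⟨?_, ⟨m1, hs1⟩, ⟨m2, hs2⟩, ⟨m3, hs3⟩⟩
    have e1 : ((a^2).toNat : ℤ) = a^2 := Int.toNat_of_nonneg (by positivity)
    have e2 : ((b^2).toNat : ℤ) = b^2 := Int.toNat_of_nonneg (by positivity)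
    have e3 : ((c^2).toNat : ℤ) = c^2 := Int.toNat_of_nonneg (by positivity)
    have : (((a^2).toNat + (b^2).toNat + (c^2).toNat : ℕ) : ℤ) = (n : ℤ) := by
      push_cast [e1, e2, e3]
      linarith [h7]
    exact_mod_cast this
  · obtain ⟨⟨s, v, w⟩, hx⟩ := x
    rw [mem_T] at hx
    obtain ⟨hsum, hQs, hQv, hQw⟩ := hx
    simp only at *
    obtain ⟨p1, o1, e1⟩ := sqrtQ hQs
    obtain ⟨p2, o2, e2⟩ := sqrtQ hQv
    obtain ⟨p3, o3, e3⟩ := sqrtQ hQw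
    refine ⟨p1, o1, p2, o2, p3, o3, ?_⟩
    rw [e1, e2, e3]
    exact_mod_cast congrArg (fun z : ℕ => (z : ℤ)) hsum
  · rintro ⟨⟨a, b, c⟩, h1, h2, h3, h4, h5, h6, h7⟩
    apply Subtype.ext
    simp only
    obtain ⟨m1, hm1, hs1⟩ := posodd_sq h1 h2
    obtain ⟨m2, hm2, hs2⟩ := posodd_sq h3 h4
    obtain ⟨m3, hm3, hs3⟩ := posodd_sq h5 h6
    rw [hs1, hs2, hs3, Nat.sqrt_eq', Nat.sqrt_eq', Nat.sqrt_eq']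
    rw [← hm1, ← hm2, ← hm3]
  · rintro ⟨⟨s, v, w⟩, hx⟩
    apply Subtype.ext
    rw [mem_T] at hx
    obtain ⟨hsum, hQs, hQv, hQw⟩ := hx
    simp only
    obtain ⟨_, _, e1⟩ := sqrtQ hQs
    obtain ⟨_, _, e2⟩ := sqrtQ hQv
    obtain ⟨_, _, e3⟩ := sqrtQ hQw
    rw [e1, e2, e3, Int.toNat_natCast, Int.toNat_natCast, Int.toNat_natCast]

lemma ind2_mul (a b c : ℕ) :
    ind2 a * (ind2 b * ind2 c) = if (isOddSq a ∧ isOddSq b ∧ isOddSq c) then 1 else 0 := by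
  by_cases h1 : isOddSq a <;> by_cases h2 : isOddSq b <;> by_cases h3 : isOddSq c <;> simp [ind2, h1, h2, h3]

lemma coeff_psi3 (n : ℕ) : PowerSeries.coeff n (psi2 ^ 3) = ((TTri n).card : ZMod 2) := by
  rw [show psi2^3 = psi2 * (psi2 * psi2) by ring, PowerSeries.coeff_mul]
  have h1 : ∀ p ∈ Finset.HasAntidiagonal.antidiagonal n,
      (PowerSeries.coeff p.1) psi2 * (PowerSeries.coeff p.2) (psi2 * psi2)
      = ∑ r ∈ Finset.HasAntidiagonal.antidiagonal p.2, ind2 p.1 * (ind2 r.1 * ind2 r.2) := by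
    intro p _
    rw [PowerSeries.coeff_mul, Finset.mul_sum]
    refine Finset.sum_congr rfl fun r _ => ?_
    rw [psi2, PowerSeries.coeff_mk, PowerSeries.coeff_mk, PowerSeries.coeff_mk]
  rw [Finset.sum_congr rfl h1, Finset.sum_sigma']
  have h2 : ∑ x ∈ (Finset.HasAntidiagonal.antidiagonal n).sigma (fun p => Finset.HasAntidiagonal.antidiagonal p.2),
        ind2 x.1.1 * (ind2 x.2.1 * ind2 x.2.2)
      = ∑ tri ∈ TT0 n, ind2 tri.1 * (ind2 tri.2.1 * ind2 tri.2.2) := by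
    refine Finset.sum_nbij' (fun x => (x.1.1, x.2.1, x.2.2))
      (fun tri => ⟨(tri.1, tri.2.1 + tri.2.2), (tri.2.1, tri.2.2)⟩) ?_ ?_ ?_ ?_ ?_
    · rintro ⟨⟨p1, p2⟩, ⟨r1, r2⟩⟩ ha
      simp only [Finset.mem_sigma, Finset.HasAntidiagonal.mem_antidiagonal] at ha
      simp only [TT0, Finset.mem_filter, Finset.mem_product, Finset.mem_range]
      refine ⟨⟨by omega, by omega, by omega⟩, by omega⟩
    · rintro ⟨t1, t2, t3⟩ ht
      simp only [TT0, Finset.mem_filter, Finset.mem_product, Finset.mem_range] at ht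
      simp only [Finset.mem_sigma, Finset.HasAntidiagonal.mem_antidiagonal]
      exact ⟨by omega, trivial⟩
    · rintro ⟨⟨p1, p2⟩, ⟨r1, r2⟩⟩ ha
      simp only [Finset.mem_sigma, Finset.HasAntidiagonal.mem_antidiagonal] at ha
      have : r1 + r2 = p2 := ha.2
      simp only [this]
    · rintro ⟨t1, t2, t3⟩ _
      rfl
    · rintro ⟨⟨p1, p2⟩, ⟨r1, r2⟩⟩ _
      rfl
  rw [h2]
  have h3 : ∀ tri ∈ TT0 n, ind2 tri.1 * (ind2 tri.2.1 * ind2 tri.2.2)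
      = if (isOddSq tri.1 ∧ isOddSq tri.2.1 ∧ isOddSq tri.2.2) then 1 else 0 := fun tri _ => ind2_mul tri.1 tri.2.1 tri.2.2
  rw [Finset.sum_congr rfl h3, Finset.sum_boole]
  rfl

theorem delta_cubed_coeff_mod_two (n : ℕ) :
    PowerSeries.coeff n (Delta ^ 3) ≡ (q3 n : ℤ) [ZMOD 2] := by
  have key : ((PowerSeries.coeff n (Delta ^ 3) : ℤ) : ZMod 2) = ((q3 n : ℤ) : ZMod 2) := by
    have h1 : ((PowerSeries.coeff n (Delta ^ 3) : ℤ) : ZMod 2)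
        = PowerSeries.coeff n (PowerSeries.map (Int.castRingHom (ZMod 2)) (Delta ^ 3)) := by
      rw [PowerSeries.coeff_map]; rfl
    rw [h1, map_pow, map_Delta, coeff_psi3, q3_card]
    push_cast
    rfl
  have := (ZMod.intCast_eq_intCast_iff _ _ _).mp key
  exact_mod_cast this
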